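/- For stochastic zero-diagonal matrices W_R, W_M: the conditions (a) W_R and W_M are doubly stochastic, and (b) w^R_{ij} + w^R_{ji} = w^M_{ij} + w^M_{ji} for all i,j, hold if and only if Σ_{i∉S}Σ_{j∈S} w^R_{ij} = Σ_{i∉S}Σ_{j∈S} w^M_{ji} for every nonempty proper subset S of V. -/

import Mathlib

open Finset

lemma cut_helper {V : Type*} [Fintype V] [DecidableEq V] (w : V → V → ℝ) (S : Finset V) :
    ∑ i ∈ Sᶜ, ∑ j ∈ S, w i j = ∑ j ∈ S, ((∑ i, w i j) - ∑ i ∈ S, w i j) := by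
  rw [Finset.sum_comm]
  refine Finset.sum_congr rfl fun j _ => ?_
  have := Finset.sum_compl_add_sum S (fun i => w i j)
  linarith

/-- **Generalized Isothermal Theorem (equivalence).**
For stochastic zero-diagonal weight matrices `wR, wM` on a vertex set with `n ≥ 3`:
(a) both matrices are doubly stochastic and (b) `wR i j + wR j i = wM i j + wM j i` for all
`i, j` — hold if and only if `Σ_{i∉S} Σ_{j∈S} wR i j = Σ_{i∉S} Σ_{j∈S} wM j i` for every
nonempty proper subset `S` of `V`. -/
theorem generalized_isothermal_iff
    {V : Type*} [Fintype V] [DecidableEq V] (hcard : 3 ≤ Fintype.card V)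
    (wR wM : V → V → ℝ)
    (hRnn : ∀ i j, 0 ≤ wR i j) (hMnn : ∀ i j, 0 ≤ wM i j)
    (hRdiag : ∀ i, wR i i = 0) (hMdiag : ∀ i, wM i i = 0)
    (hRrow : ∀ i, ∑ j, wR i j = 1) (hMrow : ∀ i, ∑ j, wM i j = 1) :
    ((∀ j, ∑ i, wR i j = 1) ∧ (∀ j, ∑ i, wM i j = 1) ∧
      (∀ i j, wR i j + wR j i = wM i j + wM j i)) ↔
    (∀ S : Finset V, S.Nonempty → S ≠ Finset.univ →
      ∑ i ∈ Sᶜ, ∑ j ∈ S, wR i j = ∑ i ∈ Sᶜ, ∑ j ∈ S, wM j i) := by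
  constructor
  · rintro ⟨hRc, hMc, hb⟩ S hS hSu
    have hL := cut_helper wR S
    have hM := cut_helper (fun a b => wM b a) S
    rw [hL, hM]
    have key : ∑ j ∈ S, ∑ i ∈ S, wR i j = ∑ j ∈ S, ∑ i ∈ S, wM j i := by
      have h2 : ∑ j ∈ S, ∑ i ∈ S, (wR i j + wR j i)
          = ∑ j ∈ S, ∑ i ∈ S, (wM i j + wM j i) :=
        Finset.sum_congr rfl fun j _ => Finset.sum_congr rfl fun i _ => hb i j
      simp only [Finset.sum_add_distrib] at h2
      have eR : ∑ j ∈ S, ∑ i ∈ S, wR j i = ∑ j ∈ S, ∑ i ∈ S, wR i j :=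
        Finset.sum_comm
      have eM : ∑ j ∈ S, ∑ i ∈ S, wM i j = ∑ j ∈ S, ∑ i ∈ S, wM j i :=
        Finset.sum_comm
      linarith
    simp only [hRc, hMrow]
    rw [Finset.sum_sub_distrib, Finset.sum_sub_distrib, key]
  · intro h
    have h1ne : ∀ j : V, ({j} : Finset V) ≠ univ := by
      intro j hj
      have : Fintype.card V = 1 := by
        rw [← Finset.card_univ, ← hj, Finset.card_singleton]
      omega
    have hRc : ∀ j, ∑ i, wR i j = 1 := by
      intro j
      have hcut := h {j} (Finset.singleton_nonempty j) (h1ne j)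
      simp only [Finset.sum_singleton] at hcut
      have h1 := Finset.sum_compl_add_sum ({j} : Finset V) (fun i => wR i j)
      have h2 := Finset.sum_compl_add_sum ({j} : Finset V) (fun i => wM j i)
      rw [Finset.sum_singleton] at h1 h2
      have := hMrow j
      have := hRdiag j
      have := hMdiag j
      linarith
    have hMc : ∀ j, ∑ i, wM i j = 1 := by
      intro j
      have hne : (({j} : Finset V)ᶜ).Nonempty := by
        rw [← Finset.card_pos, Finset.card_compl, Finset.card_singleton]
        omega
      have hnu : (({j} : Finset V)ᶜ) ≠ univ := by
        intro hc
        have : ({j} : Finset V) = ∅ := by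
          simpa using congrArg compl hc
        simp at this
      have hcut := h ({j} : Finset V)ᶜ hne hnu
      rw [compl_compl] at hcut
      simp only [Finset.sum_singleton] at hcut
      have h1 := Finset.sum_compl_add_sum ({j} : Finset V) (fun k => wR j k)
      have h2 := Finset.sum_compl_add_sum ({j} : Finset V) (fun k => wM k j)
      rw [Finset.sum_singleton] at h1 h2
      have := hRrow j
      have := hRdiag j
      have := hMdiag j
      linarith
    refine ⟨hRc, hMc, ?_⟩
    intro i j
    by_cases hij : i = j
    · subst hij; simp [hRdiag, hMdiag]
    · have hSne : ({i, j} : Finset V).Nonempty := ⟨i, by simp⟩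
      have hSu : ({i, j} : Finset V) ≠ univ := by
        intro hu
        have hle : ({i, j} : Finset V).card ≤ 2 := by
          have := Finset.card_insert_le i ({j} : Finset V)
          simpa using this
        rw [hu, Finset.card_univ] at hle
        omega
      have hcut := h {i, j} hSne hSu
      have hL := cut_helper wR ({i, j} : Finset V)
      have hM := cut_helper (fun a b => wM b a) ({i, j} : Finset V)
      rw [hL, hM] at hcut
      simp only [Finset.sum_pair hij] at hcut
      rw [hRc i, hRc j, hMrow i, hMrow j, hRdiag i, hRdiag j, hMdiag i, hMdiag j] at hcut
      linarith
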